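/- Let ε>0 and let p = p(n) satisfy p ≥ 1/n, and set m = log^{[4]} n/p. Then, with probability 1 − o(n^{-3}) (i.e., n³ times the failure probability tends to 0 as n→∞), the random digraph D = D(n,p) has the following property: for all disjoint sets A,B ⊆ [n] with |A| ≥ m/2 and |B| ≥ n/3 and each j∈{+,−}, (1−ε)p|A||B| ≤ e^j_D(A,B) ≤ (1+ε)p|A||B|. -/

import Mathlib

open Finset

/-- The type of directed edges (ordered pairs of distinct vertices) on `Fin n`. -/
abbrev Eg (n : ℕ) := {p : Fin n × Fin n // p.1 ≠ p.2}

/-- `drel D u v` means the directed edge from `u` to `v` belongs to the digraph `D`. -/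
def drel {n : ℕ} (D : Finset (Eg n)) (u v : Fin n) : Prop :=
  ∃ h : u ≠ v, (⟨(u, v), h⟩ : Eg n) ∈ D

/-- The out-degree of a vertex. -/
noncomputable def outdeg {n : ℕ} (D : Finset (Eg n)) (v : Fin n) : ℕ :=
  {w | drel D v w}.ncard

/-- The in-degree of a vertex. -/
noncomputable def indeg {n : ℕ} (D : Finset (Eg n)) (v : Fin n) : ℕ :=
  {w | drel D w v}.ncard

/-- The number of out-neighbours of `v` lying in `B`. -/
noncomputable def outdegIn {n : ℕ} (D : Finset (Eg n)) (v : Fin n) (B : Set (Fin n)) : ℕ :=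
  {w ∈ B | drel D v w}.ncard

/-- The number of in-neighbours of `v` lying in `B`. -/
noncomputable def indegIn {n : ℕ} (D : Finset (Eg n)) (v : Fin n) (B : Set (Fin n)) : ℕ :=
  {w ∈ B | drel D w v}.ncard

/-- The out-neighbourhood of a set `U` (vertices outside `U` receiving an edge from `U`). -/
def Nout {n : ℕ} (D : Finset (Eg n)) (U : Set (Fin n)) : Set (Fin n) :=
  {w | w ∉ U ∧ ∃ u ∈ U, drel D u w}

/-- The in-neighbourhood of a set `U` (vertices outside `U` sending an edge to `U`). -/
def Nin {n : ℕ} (D : Finset (Eg n)) (U : Set (Fin n)) : Set (Fin n) :=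
  {w | w ∉ U ∧ ∃ u ∈ U, drel D w u}

/-- `l` is (the cyclic vertex sequence of) a directed cycle in the digraph `D`. -/
def IsDiCycle {n : ℕ} (D : Finset (Eg n)) (l : List (Fin n)) : Prop :=
  2 ≤ l.length ∧ l.Nodup ∧ ∀ h : l ≠ [], List.Chain' (drel D) (l ++ [l.head h])

/-- A digraph is Hamiltonian if it contains a directed cycle through every vertex. -/
def Hamiltonian {n : ℕ} (D : Finset (Eg n)) : Prop :=
  ∃ l : List (Fin n), IsDiCycle D l ∧ ∀ v : Fin n, v ∈ l

open scoped Classical in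
/-- The probability that the binomial random digraph `D(n,p)` (each of the `n(n-1)` possible
directed edges present independently with probability `p`) satisfies the property `P`. -/
noncomputable def dnpProb (n : ℕ) (p : ℝ) (P : Finset (Eg n) → Prop) : ℝ :=
  ∑ D : Finset (Eg n),
    if P D then p ^ D.card * (1 - p) ^ (Fintype.card (Eg n) - D.card) else 0

/-- `e^+(A,B)`: the number of edges of `D` directed from `A` to `B`. -/
noncomputable def eOut {n : ℕ} (D : Finset (Eg n)) (A B : Set (Fin n)) : ℕ :=
  {e : Eg n | e ∈ D ∧ e.1.1 ∈ A ∧ e.1.2 ∈ B}.ncard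


/-! ### Auxiliary machinery for the proof of `edges_between_sets` -/

/-- The weight of a digraph `D` in the binomial model `D(n,p)`. -/
noncomputable def edgeWgt (n : ℕ) (p : ℝ) (D : Finset (Eg n)) : ℝ :=
  p ^ D.card * (1 - p) ^ (Fintype.card (Eg n) - D.card)

open scoped Classical in
/-- The probability of an event, abbreviation matching `dnpProb`. -/
noncomputable def eProb (n : ℕ) (p : ℝ) (Q : Finset (Eg n) → Prop) : ℝ :=
  ∑ D : Finset (Eg n), if Q D then edgeWgt n p D else 0

lemma dnpProb_eq_eProb (n : ℕ) (p : ℝ) (P : Finset (Eg n) → Prop) :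
    dnpProb n p P = eProb n p P := rfl

lemma edgeWgt_nonneg {n : ℕ} {p : ℝ} (hp0 : 0 ≤ p) (hp1 : p ≤ 1) (D : Finset (Eg n)) :
    0 ≤ edgeWgt n p D :=
  mul_nonneg (pow_nonneg hp0 _) (pow_nonneg (by linarith) _)

lemma edgeWgt_eq_prod {n : ℕ} (p : ℝ) (D : Finset (Eg n)) :
    edgeWgt n p D = (∏ _e ∈ D, p) * ∏ _e ∈ (univ \ D), (1 - p) := by
  rw [prod_const, prod_const, card_sdiff_of_subset (subset_univ D), card_univ]
  rfl

lemma sum_edgeWgt_mul_pow {n : ℕ} (p x : ℝ) (S : Finset (Eg n)) :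
    ∑ D : Finset (Eg n), edgeWgt n p D * x ^ (D ∩ S).card
      = (1 - p + p * x) ^ S.card := by
  classical
  have key : ∀ D : Finset (Eg n), edgeWgt n p D * x ^ (D ∩ S).card
      = (∏ e ∈ D, (p * if e ∈ S then x else 1)) * ∏ _e ∈ (univ \ D), (1 - p) := by
    intro D
    rw [prod_mul_distrib, Finset.prod_ite_mem, prod_const, prod_const, edgeWgt_eq_prod,
      prod_const, prod_const]
    ring
  simp_rw [key]
  have h2 := Finset.prod_add (fun e : Eg n => p * if e ∈ S then x else 1)
      (fun _ : Eg n => (1 - p)) univ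
  have h3 : ∑ D : Finset (Eg n), (∏ e ∈ D, (p * if e ∈ S then x else 1)) * ∏ _e ∈ (univ \ D), (1 - p) = ∑ t ∈ (univ : Finset (Eg n)).powerset, (∏ e ∈ t, (p * if e ∈ S then x else 1)) * ∏ _e ∈ (univ \ t), (1 - p) := by rw [Finset.powerset_univ]
  rw [h3, ← h2, ← Finset.prod_sdiff (subset_univ S)]
  have e1 : ∀ e ∈ univ \ S, ((p * if e ∈ S then x else 1) + (1 - p)) = 1 := by
    intro e he
    rw [mem_sdiff] at he
    rw [if_neg he.2]; ring
  have e2 : ∀ e ∈ S, ((p * if e ∈ S then x else 1) + (1 - p)) = 1 - p + p * x := by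
    intro e he
    rw [if_pos he]; ring
  rw [Finset.prod_congr rfl e1, Finset.prod_congr rfl e2, prod_const_one, prod_const, one_mul]

lemma sum_edgeWgt {n : ℕ} (p : ℝ) : ∑ D : Finset (Eg n), edgeWgt n p D = 1 := by
  have := sum_edgeWgt_mul_pow p 1 (∅ : Finset (Eg n))
  simpa using this

lemma eProb_nonneg {n : ℕ} {p : ℝ} (hp0 : 0 ≤ p) (hp1 : p ≤ 1)
    (Q : Finset (Eg n) → Prop) : 0 ≤ eProb n p Q := by
  classical
  refine Finset.sum_nonneg fun D _ => ?_
  split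
  · exact edgeWgt_nonneg hp0 hp1 D
  · exact le_rfl

lemma eProb_mono {n : ℕ} {p : ℝ} (hp0 : 0 ≤ p) (hp1 : p ≤ 1)
    {Q Q' : Finset (Eg n) → Prop} (h : ∀ D, Q D → Q' D) :
    eProb n p Q ≤ eProb n p Q' := by
  classical
  refine Finset.sum_le_sum fun D _ => ?_
  by_cases hD : Q D
  · rw [if_pos hD, if_pos (h D hD)]
  · rw [if_neg hD]
    split
    · exact edgeWgt_nonneg hp0 hp1 D
    · exact le_rfl

lemma eProb_le_one {n : ℕ} {p : ℝ} (hp0 : 0 ≤ p) (hp1 : p ≤ 1)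
    (Q : Finset (Eg n) → Prop) : eProb n p Q ≤ 1 := by
  classical
  calc eProb n p Q ≤ eProb n p (fun _ => True) := eProb_mono hp0 hp1 (fun _ _ => trivial)
  _ = 1 := by
      rw [eProb, ← sum_edgeWgt (n := n) p]
      exact Finset.sum_congr rfl fun D _ => if_pos trivial

lemma one_sub_eProb {n : ℕ} (p : ℝ) (Q : Finset (Eg n) → Prop) :
    1 - eProb n p Q = eProb n p (fun D => ¬ Q D) := by
  classical
  rw [eq_comm, eq_sub_iff_add_eq, eProb, eProb, ← Finset.sum_add_distrib,
    ← sum_edgeWgt (n := n) p]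
  refine Finset.sum_congr rfl fun D _ => ?_
  by_cases hD : Q D <;> simp [hD]

lemma eProb_union_bound {n : ℕ} {p : ℝ} (hp0 : 0 ≤ p) (hp1 : p ≤ 1)
    {ι : Type*} (I : Finset ι) (Q : Finset (Eg n) → Prop)
    (R : ι → Finset (Eg n) → Prop) (h : ∀ D, Q D → ∃ i ∈ I, R i D) :
    eProb n p Q ≤ ∑ i ∈ I, eProb n p (R i) := by
  classical
  simp only [eProb]
  rw [Finset.sum_comm]
  refine Finset.sum_le_sum fun D _ => ?_
  by_cases hD : Q D
  · rw [if_pos hD]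
    obtain ⟨i, hiI, hiR⟩ := h D hD
    calc edgeWgt n p D = (if R i D then edgeWgt n p D else 0) := by rw [if_pos hiR]
    _ ≤ ∑ i ∈ I, (if R i D then edgeWgt n p D else 0) := by
        refine Finset.single_le_sum (f := fun j => if R j D then edgeWgt n p D else 0)
          (fun j _ => ?_) hiI
        split
        · exact edgeWgt_nonneg hp0 hp1 D
        · exact le_rfl
  · rw [if_neg hD]
    refine Finset.sum_nonneg fun j _ => ?_
    split
    · exact edgeWgt_nonneg hp0 hp1 D
    · exact le_rfl

lemma exp_quad_aux {y : ℝ} (h : |y| ≤ 1) : Real.exp y ≤ 1 + y + y ^ 2 := by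
  have hb := Real.exp_bound h (n := 2) (by norm_num)
  simp [Finset.sum_range_succ] at hb
  have h2 : |y| ^ 2 = y ^ 2 := sq_abs y
  have h1 := abs_le.mp hb
  nlinarith [sq_nonneg y, h1.1, h1.2]

lemma tail_upper {n : ℕ} {p x : ℝ} (hp0 : 0 ≤ p) (hp1 : p ≤ 1) (hx : 1 ≤ x)
    (S : Finset (Eg n)) (a : ℝ) :
    eProb n p (fun D => a ≤ ((D ∩ S).card : ℝ))
      ≤ x ^ (-a) * (1 - p + p * x) ^ S.card := by
  classical
  have hx0 : 0 < x := lt_of_lt_of_le one_pos hx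
  have step : ∀ D : Finset (Eg n),
      (if a ≤ ((D ∩ S).card : ℝ) then edgeWgt n p D else 0)
        ≤ edgeWgt n p D * x ^ (D ∩ S).card * x ^ (-a) := by
    intro D
    split
    · rename_i hD
      have h1 : (1 : ℝ) ≤ x ^ (D ∩ S).card * x ^ (-a) := by
        have : x ^ (D ∩ S).card * x ^ (-a) = x ^ (((D ∩ S).card : ℝ) + (-a)) := by
          rw [Real.rpow_add hx0, Real.rpow_natCast]
        rw [this]
        calc (1:ℝ) = x ^ (0:ℝ) := (Real.rpow_zero x).symm
        _ ≤ _ := Real.rpow_le_rpow_of_exponent_le hx (by linarith)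
      calc edgeWgt n p D = edgeWgt n p D * 1 := (mul_one _).symm
      _ ≤ edgeWgt n p D * (x ^ (D ∩ S).card * x ^ (-a)) :=
          mul_le_mul_of_nonneg_left h1 (edgeWgt_nonneg hp0 hp1 D)
      _ = _ := by ring
    · exact mul_nonneg (mul_nonneg (edgeWgt_nonneg hp0 hp1 D) (pow_nonneg hx0.le _))
        (Real.rpow_nonneg hx0.le _)
  calc eProb n p (fun D => a ≤ ((D ∩ S).card : ℝ))
      ≤ ∑ D : Finset (Eg n), edgeWgt n p D * x ^ (D ∩ S).card * x ^ (-a) :=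
        Finset.sum_le_sum fun D _ => step D
  _ = (∑ D : Finset (Eg n), edgeWgt n p D * x ^ (D ∩ S).card) * x ^ (-a) := by
      rw [Finset.sum_mul]
  _ = _ := by rw [sum_edgeWgt_mul_pow, mul_comm]

lemma tail_lower {n : ℕ} {p x : ℝ} (hp0 : 0 ≤ p) (hp1 : p ≤ 1) (hx0 : 0 < x) (hx : x ≤ 1)
    (S : Finset (Eg n)) (a : ℝ) :
    eProb n p (fun D => ((D ∩ S).card : ℝ) ≤ a)
      ≤ x ^ (-a) * (1 - p + p * x) ^ S.card := by
  classical
  have step : ∀ D : Finset (Eg n),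
      (if ((D ∩ S).card : ℝ) ≤ a then edgeWgt n p D else 0)
        ≤ edgeWgt n p D * x ^ (D ∩ S).card * x ^ (-a) := by
    intro D
    split
    · rename_i hD
      have h1 : (1 : ℝ) ≤ x ^ (D ∩ S).card * x ^ (-a) := by
        have : x ^ (D ∩ S).card * x ^ (-a) = x ^ (((D ∩ S).card : ℝ) + (-a)) := by
          rw [Real.rpow_add hx0, Real.rpow_natCast]
        rw [this]
        calc (1:ℝ) = x ^ (0:ℝ) := (Real.rpow_zero x).symm
        _ ≤ _ := Real.rpow_le_rpow_of_exponent_ge hx0 hx (by linarith)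
      calc edgeWgt n p D = edgeWgt n p D * 1 := (mul_one _).symm
      _ ≤ edgeWgt n p D * (x ^ (D ∩ S).card * x ^ (-a)) :=
          mul_le_mul_of_nonneg_left h1 (edgeWgt_nonneg hp0 hp1 D)
      _ = _ := by ring
    · exact mul_nonneg (mul_nonneg (edgeWgt_nonneg hp0 hp1 D) (pow_nonneg hx0.le _))
        (Real.rpow_nonneg hx0.le _)
  calc eProb n p (fun D => ((D ∩ S).card : ℝ) ≤ a)
      ≤ ∑ D : Finset (Eg n), edgeWgt n p D * x ^ (D ∩ S).card * x ^ (-a) :=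
        Finset.sum_le_sum fun D _ => step D
  _ = (∑ D : Finset (Eg n), edgeWgt n p D * x ^ (D ∩ S).card) * x ^ (-a) := by
      rw [Finset.sum_mul]
  _ = _ := by rw [sum_edgeWgt_mul_pow, mul_comm]

lemma exp_rpow_aux (t y : ℝ) : (Real.exp t) ^ y = Real.exp (t * y) := by
  rw [Real.rpow_def_of_pos (Real.exp_pos t), Real.log_exp]

lemma base_le_exp_aux {p y : ℝ} (hp0 : 0 ≤ p) (hp1 : p ≤ 1) (hy : 0 < y) (M : ℕ) :
    (1 - p + p * y) ^ M ≤ Real.exp ((M : ℝ) * (p * (y - 1))) := by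
  have hb0 : 0 ≤ 1 - p + p * y := by nlinarith
  have hb : 1 - p + p * y ≤ Real.exp (p * (y - 1)) := by
    have := Real.add_one_le_exp (p * (y - 1))
    linarith
  calc (1 - p + p * y) ^ M ≤ (Real.exp (p * (y - 1))) ^ M := pow_le_pow_left₀ hb0 hb M
  _ = Real.exp ((M : ℝ) * (p * (y - 1))) := (Real.exp_nat_mul _ M).symm

lemma chernoff_upper {n : ℕ} {p ε t : ℝ} (hp0 : 0 ≤ p) (hp1 : p ≤ 1)
    (ht0 : 0 < t) (ht1 : t ≤ 1) (htε : 3 * t ≤ ε) (S : Finset (Eg n)) :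
    eProb n p (fun D => (1 + ε) * p * S.card ≤ ((D ∩ S).card : ℝ))
      ≤ Real.exp (-(t * ε / 2) * (p * S.card)) := by
  set a : ℝ := (1 + ε) * p * S.card with ha
  have h1 := tail_upper hp0 hp1 (Real.one_le_exp ht0.le) S a
  have h2 : (Real.exp t) ^ (-a) = Real.exp (t * (-a)) := exp_rpow_aux t (-a)
  have h3 := base_le_exp_aux hp0 hp1 (Real.exp_pos t) (y := Real.exp t) S.card
  have hM : (0:ℝ) ≤ (S.card : ℝ) := Nat.cast_nonneg _
  have hq : (0:ℝ) ≤ p * S.card := mul_nonneg hp0 hM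
  have hexp : Real.exp t ≤ 1 + t + t ^ 2 := exp_quad_aux (by rw [abs_of_pos ht0]; exact ht1)
  calc eProb n p (fun D => a ≤ ((D ∩ S).card : ℝ))
      ≤ (Real.exp t) ^ (-a) * (1 - p + p * Real.exp t) ^ S.card := h1
  _ ≤ Real.exp (t * (-a)) * Real.exp ((S.card : ℝ) * (p * (Real.exp t - 1))) := by
      rw [h2]
      exact mul_le_mul_of_nonneg_left h3 (Real.exp_pos _).le
  _ = Real.exp (t * (-a) + (S.card : ℝ) * (p * (Real.exp t - 1))) := (Real.exp_add _ _).symm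
  _ ≤ Real.exp (-(t * ε / 2) * (p * S.card)) := by
      apply Real.exp_le_exp.mpr
      rw [ha]
      nlinarith [mul_le_mul_of_nonneg_left hexp hq, mul_nonneg hq ht0.le,
        mul_nonneg (mul_nonneg hq ht0.le) ht0.le]

lemma chernoff_lower {n : ℕ} {p ε t : ℝ} (hp0 : 0 ≤ p) (hp1 : p ≤ 1)
    (ht0 : 0 < t) (ht1 : t ≤ 1) (htε : 3 * t ≤ ε) (S : Finset (Eg n)) :
    eProb n p (fun D => ((D ∩ S).card : ℝ) ≤ (1 - ε) * p * S.card)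
      ≤ Real.exp (-(t * ε / 2) * (p * S.card)) := by
  set a : ℝ := (1 - ε) * p * S.card with ha
  have h1 := tail_lower hp0 hp1 (Real.exp_pos (-t)) (Real.exp_le_one_iff.mpr (by linarith)) S a
  have h2 : (Real.exp (-t)) ^ (-a) = Real.exp ((-t) * (-a)) := exp_rpow_aux (-t) (-a)
  have h3 := base_le_exp_aux hp0 hp1 (Real.exp_pos (-t)) (y := Real.exp (-t)) S.card
  have hM : (0:ℝ) ≤ (S.card : ℝ) := Nat.cast_nonneg _
  have hq : (0:ℝ) ≤ p * S.card := mul_nonneg hp0 hM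
  have hexp : Real.exp (-t) ≤ 1 + (-t) + (-t) ^ 2 :=
    exp_quad_aux (by rw [abs_of_neg (by linarith)]; linarith)
  calc eProb n p (fun D => ((D ∩ S).card : ℝ) ≤ a)
      ≤ (Real.exp (-t)) ^ (-a) * (1 - p + p * Real.exp (-t)) ^ S.card := h1
  _ ≤ Real.exp ((-t) * (-a)) * Real.exp ((S.card : ℝ) * (p * (Real.exp (-t) - 1))) := by
      rw [h2]
      exact mul_le_mul_of_nonneg_left h3 (Real.exp_pos _).le
  _ = Real.exp ((-t) * (-a) + (S.card : ℝ) * (p * (Real.exp (-t) - 1))) :=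
      (Real.exp_add _ _).symm
  _ ≤ Real.exp (-(t * ε / 2) * (p * S.card)) := by
      apply Real.exp_le_exp.mpr
      rw [ha]
      nlinarith [mul_le_mul_of_nonneg_left hexp hq, mul_nonneg hq ht0.le,
        mul_nonneg (mul_nonneg hq ht0.le) ht0.le]

/-- The set of potential edges from `A` to `B`. -/
def egSet (n : ℕ) (A B : Finset (Fin n)) : Finset (Eg n) :=
  univ.filter (fun e => e.1.1 ∈ A ∧ e.1.2 ∈ B)

lemma card_egSet {n : ℕ} {A B : Finset (Fin n)} (h : Disjoint A B) :
    (egSet n A B).card = A.card * B.card := by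
  rw [← Finset.card_product]
  apply Finset.card_bij (fun e _ => e.1)
  · intro e he
    simp only [egSet, mem_filter] at he
    simp [Finset.mem_product, he.2.1, he.2.2]
  · intro e₁ h₁ e₂ h₂ hee
    exact Subtype.ext hee
  · intro q hq
    rw [Finset.mem_product] at hq
    have hne : q.1 ≠ q.2 := by
      intro hqq
      exact (Finset.disjoint_left.mp h hq.1) (hqq ▸ hq.2)
    refine ⟨⟨q, hne⟩, ?_, rfl⟩
    simp [egSet, hq.1, hq.2]

lemma eOut_eq_card {n : ℕ} (D : Finset (Eg n)) (A B : Finset (Fin n)) :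
    eOut D ↑A ↑B = (D ∩ egSet n A B).card := by
  rw [eOut, ← Set.ncard_coe_finset]
  congr 1
  ext e
  simp [egSet, Finset.mem_inter]

/-- A bad event: a disjoint pair of large sets with a deviating edge count
(direction selected by the first `Bool`, tail by the second). -/
def badEv (n : ℕ) (p ε L : ℝ) (i : Finset (Fin n) × Finset (Fin n) × Bool × Bool)
    (D : Finset (Eg n)) : Prop :=
  Disjoint i.1 i.2.1 ∧ L / p / 2 ≤ (i.1.card : ℝ) ∧ (n : ℝ) / 3 ≤ (i.2.1.card : ℝ) ∧
    (cond i.2.2.2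
      ((1 + ε) * p * i.1.card * i.2.1.card
        ≤ ((D ∩ egSet n (cond i.2.2.1 i.1 i.2.1) (cond i.2.2.1 i.2.1 i.1)).card : ℝ))
      (((D ∩ egSet n (cond i.2.2.1 i.1 i.2.1) (cond i.2.2.1 i.2.1 i.1)).card : ℝ)
        ≤ (1 - ε) * p * i.1.card * i.2.1.card))

lemma eProb_badEv_le {n : ℕ} {p ε t L : ℝ} (hp0 : 0 < p) (hp1 : p ≤ 1)
    (ht0 : 0 < t) (ht1 : t ≤ 1) (htε : 3 * t ≤ ε) (hL : 0 ≤ L)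
    (i : Finset (Fin n) × Finset (Fin n) × Bool × Bool) :
    eProb n p (badEv n p ε L i)
      ≤ Real.exp (-(t * ε / 2) * (L / 2 * ((n : ℝ) / 3))) := by
  classical
  obtain ⟨A, B, b1, b2⟩ := i
  by_cases hd : Disjoint A B ∧ L / p / 2 ≤ (A.card : ℝ) ∧ (n : ℝ) / 3 ≤ (B.card : ℝ)
  · obtain ⟨hdisj, hA, hB⟩ := hd
    have hn3 : (0:ℝ) ≤ (n : ℝ) / 3 := by positivity
    have hpa : L / 2 ≤ p * A.card := by
      have h2p : (0:ℝ) < p * 2 := by nlinarith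
      rw [div_div, div_le_iff₀ h2p] at hA
      nlinarith
    have hpa0 : (0:ℝ) ≤ p * A.card := mul_nonneg hp0.le (Nat.cast_nonneg _)
    have hkey : ∀ (X Y : Finset (Fin n)), (egSet n X Y).card = A.card * B.card →
        Real.exp (-(t * ε / 2) * (p * (egSet n X Y).card))
          ≤ Real.exp (-(t * ε / 2) * (L / 2 * ((n : ℝ) / 3))) := by
      intro X Y hXY
      apply Real.exp_le_exp.mpr
      have h1 : L / 2 * ((n : ℝ) / 3) ≤ (p * A.card) * (B.card : ℝ) :=
        mul_le_mul hpa hB hn3 hpa0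
      have h2 : (p * A.card) * (B.card : ℝ) = p * ((egSet n X Y).card : ℝ) := by
        rw [hXY]; push_cast; ring
      have hc : 0 ≤ t * ε / 2 := by nlinarith [ht0, htε]
      nlinarith [h1, h2]
    have hcAB : (egSet n A B).card = A.card * B.card := card_egSet hdisj
    have hcBA : (egSet n B A).card = A.card * B.card := by
      rw [card_egSet hdisj.symm]; ring
    have hthr : ∀ (X Y : Finset (Fin n)), (egSet n X Y).card = A.card * B.card →
        ∀ c : ℝ, c * p * ((egSet n X Y).card : ℝ) = c * p * A.card * B.card := by
      intro X Y hXY c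
      rw [hXY]; push_cast; ring
    cases b1 <;> cases b2
    · -- direction B→A, lower tail
      calc eProb n p (badEv n p ε L (A, B, false, false))
          ≤ eProb n p (fun D => ((D ∩ egSet n B A).card : ℝ)
              ≤ (1 - ε) * p * (egSet n B A).card) := by
            refine eProb_mono hp0.le hp1 fun D hD => ?_
            rw [hthr B A hcBA]
            exact hD.2.2.2
      _ ≤ Real.exp (-(t * ε / 2) * (p * (egSet n B A).card)) :=
            chernoff_lower hp0.le hp1 ht0 ht1 htε _
      _ ≤ _ := hkey B A hcBA
    · -- direction B→A, upper tail
      calc eProb n p (badEv n p ε L (A, B, false, true))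
          ≤ eProb n p (fun D => (1 + ε) * p * (egSet n B A).card
              ≤ ((D ∩ egSet n B A).card : ℝ)) := by
            refine eProb_mono hp0.le hp1 fun D hD => ?_
            rw [hthr B A hcBA]
            exact hD.2.2.2
      _ ≤ Real.exp (-(t * ε / 2) * (p * (egSet n B A).card)) :=
            chernoff_upper hp0.le hp1 ht0 ht1 htε _
      _ ≤ _ := hkey B A hcBA
    · -- direction A→B, lower tail
      calc eProb n p (badEv n p ε L (A, B, true, false))
          ≤ eProb n p (fun D => ((D ∩ egSet n A B).card : ℝ)
              ≤ (1 - ε) * p * (egSet n A B).card) := by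
            refine eProb_mono hp0.le hp1 fun D hD => ?_
            rw [hthr A B hcAB]
            exact hD.2.2.2
      _ ≤ Real.exp (-(t * ε / 2) * (p * (egSet n A B).card)) :=
            chernoff_lower hp0.le hp1 ht0 ht1 htε _
      _ ≤ _ := hkey A B hcAB
    · -- direction A→B, upper tail
      calc eProb n p (badEv n p ε L (A, B, true, true))
          ≤ eProb n p (fun D => (1 + ε) * p * (egSet n A B).card
              ≤ ((D ∩ egSet n A B).card : ℝ)) := by
            refine eProb_mono hp0.le hp1 fun D hD => ?_
            rw [hthr A B hcAB]
            exact hD.2.2.2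
      _ ≤ Real.exp (-(t * ε / 2) * (p * (egSet n A B).card)) :=
            chernoff_upper hp0.le hp1 ht0 ht1 htε _
      _ ≤ _ := hkey A B hcAB
  · have hz : eProb n p (badEv n p ε L (A, B, b1, b2)) ≤ 0 := by
      have : eProb n p (fun _ : Finset (Eg n) => False) = 0 := by
        simp [eProb]
      rw [← this]
      refine eProb_mono hp0.le hp1 fun D hD => ?_
      exact hd ⟨hD.1, hD.2.1, hD.2.2.1⟩
    exact hz.trans (Real.exp_pos _).le

lemma badEv_extract {n : ℕ} {p ε : ℝ} (L : ℝ) (D : Finset (Eg n))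
    (h : ¬ (∀ A B : Set (Fin n), Disjoint A B →
        L / p / 2 ≤ (A.ncard : ℝ) → (n : ℝ) / 3 ≤ (B.ncard : ℝ) →
        (((1 - ε) * p * A.ncard * B.ncard ≤ (eOut D A B : ℝ) ∧
            (eOut D A B : ℝ) ≤ (1 + ε) * p * A.ncard * B.ncard) ∧
          ((1 - ε) * p * A.ncard * B.ncard ≤ (eOut D B A : ℝ) ∧
            (eOut D B A : ℝ) ≤ (1 + ε) * p * A.ncard * B.ncard)))) :
    ∃ i ∈ (univ : Finset (Finset (Fin n) × Finset (Fin n) × Bool × Bool)),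
      badEv n p ε L i D := by
  classical
  simp only [not_forall] at h
  obtain ⟨A, B, hdisj, hA, hB, hbad⟩ := h
  set A' : Finset (Fin n) := (Set.toFinite A).toFinset with hA'
  set B' : Finset (Fin n) := (Set.toFinite B).toFinset with hB'
  have hcoeA : (A' : Set (Fin n)) = A := Set.Finite.coe_toFinset _
  have hcoeB : (B' : Set (Fin n)) = B := Set.Finite.coe_toFinset _
  have hncA : (A.ncard : ℝ) = (A'.card : ℝ) := by
    rw [Set.ncard_eq_toFinset_card A (Set.toFinite A)]
  have hncB : (B.ncard : ℝ) = (B'.card : ℝ) := by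
    rw [Set.ncard_eq_toFinset_card B (Set.toFinite B)]
  have hdisj' : Disjoint A' B' := by
    rw [← Finset.disjoint_coe, hcoeA, hcoeB]
    exact hdisj
  have hA2 : L / p / 2 ≤ (A'.card : ℝ) := hncA ▸ hA
  have hB2 : (n : ℝ) / 3 ≤ (B'.card : ℝ) := hncB ▸ hB
  have heAB : (eOut D A B : ℝ) = ((D ∩ egSet n A' B').card : ℝ) := by
    rw [← hcoeA, ← hcoeB, eOut_eq_card]
  have heBA : (eOut D B A : ℝ) = ((D ∩ egSet n B' A').card : ℝ) := by
    rw [← hcoeA, ← hcoeB, eOut_eq_card]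
  rw [hncA, hncB, heAB, heBA] at hbad
  by_cases c1 : (1 - ε) * p * (A'.card : ℝ) * (B'.card : ℝ) ≤ ((D ∩ egSet n A' B').card : ℝ)
  · by_cases c2 : ((D ∩ egSet n A' B').card : ℝ) ≤ (1 + ε) * p * (A'.card : ℝ) * (B'.card : ℝ)
    · by_cases c3 : (1 - ε) * p * (A'.card : ℝ) * (B'.card : ℝ)
          ≤ ((D ∩ egSet n B' A').card : ℝ)
      · by_cases c4 : ((D ∩ egSet n B' A').card : ℝ)
            ≤ (1 + ε) * p * (A'.card : ℝ) * (B'.card : ℝ)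
        · exact absurd ⟨⟨c1, c2⟩, c3, c4⟩ hbad
        · exact ⟨(A', B', false, true), mem_univ _,
            hdisj', hA2, hB2, le_of_lt (lt_of_not_ge c4)⟩
      · exact ⟨(A', B', false, false), mem_univ _,
          hdisj', hA2, hB2, le_of_lt (lt_of_not_ge c3)⟩
    · exact ⟨(A', B', true, true), mem_univ _,
        hdisj', hA2, hB2, le_of_lt (lt_of_not_ge c2)⟩
  · exact ⟨(A', B', true, false), mem_univ _,
      hdisj', hA2, hB2, le_of_lt (lt_of_not_ge c1)⟩

lemma dnpProb_le_one {n : ℕ} {p : ℝ} (hp0 : 0 ≤ p) (hp1 : p ≤ 1)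
    (P : Finset (Eg n) → Prop) : dnpProb n p P ≤ 1 := by
  rw [dnpProb_eq_eProb]
  exact eProb_le_one hp0 hp1 P

/-- **Proposition 7.4** (edge counts between large sets in `D(n,p)`). -/
theorem edges_between_sets (ε : ℝ) (hε : 0 < ε) (p : ℕ → ℝ)
    (hp : ∀ n : ℕ, 1 / (n : ℝ) ≤ p n) (hp1 : ∀ n : ℕ, p n ≤ 1) :
    Filter.Tendsto
      (fun n : ℕ => (n : ℝ) ^ 3 * (1 - dnpProb n (p n) (fun D : Finset (Eg n) =>
        ∀ A B : Set (Fin n), Disjoint A B →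
          -- |A| ≥ m/2 with m = log^[4] n / p
          Real.log (Real.log (Real.log (Real.log n))) / p n / 2 ≤ (A.ncard : ℝ) →
          -- |B| ≥ n/3
          (n : ℝ) / 3 ≤ (B.ncard : ℝ) →
          ((1 - ε) * p n * A.ncard * B.ncard ≤ (eOut D A B : ℝ) ∧
            (eOut D A B : ℝ) ≤ (1 + ε) * p n * A.ncard * B.ncard) ∧
          ((1 - ε) * p n * A.ncard * B.ncard ≤ (eOut D B A : ℝ) ∧
            (eOut D B A : ℝ) ≤ (1 + ε) * p n * A.ncard * B.ncard))))
      Filter.atTop (nhds 0) := by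
  classical
  have hp0 : ∀ n : ℕ, 0 ≤ p n := fun n =>
    le_trans (by positivity) (hp n)
  set L : ℕ → ℝ := fun n => Real.log (Real.log (Real.log (Real.log n))) with hLdef
  set t : ℝ := min (ε / 3) 1 with htdef
  have ht0 : 0 < t := lt_min (by positivity) one_pos
  have ht1 : t ≤ 1 := min_le_right _ _
  have htε : 3 * t ≤ ε := by
    have h := min_le_left (ε / 3) 1
    have : t ≤ ε / 3 := h
    linarith
  set c : ℝ := t * ε / 2 with hcdef
  have hc0 : 0 < c := by positivity
  have hlog4 : 0 ≤ Real.log 4 := Real.log_nonneg (by norm_num)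
  set K : ℝ := (12 * Real.log 4 + 6) / c with hKdef
  have hK0 : 0 ≤ K := by positivity
  have hLtop : Filter.Tendsto L Filter.atTop Filter.atTop := by
    have h1 : Filter.Tendsto Real.log Filter.atTop Filter.atTop := Real.tendsto_log_atTop
    exact h1.comp (h1.comp (h1.comp (h1.comp tendsto_natCast_atTop_atTop)))
  apply squeeze_zero' (g := fun n : ℕ => (n : ℝ) ^ 3 * Real.exp (-(n : ℝ)))
  · refine Filter.Eventually.of_forall fun n => ?_
    exact mul_nonneg (by positivity)
      (sub_nonneg.mpr (dnpProb_le_one (hp0 n) (hp1 n) _))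
  · filter_upwards [hLtop.eventually_ge_atTop K, Filter.eventually_ge_atTop 1] with n hKn hn1
    have hn1' : (1:ℝ) ≤ (n : ℝ) := by exact_mod_cast hn1
    have hnpos : (0:ℝ) < (n : ℝ) := by linarith
    have hppos : 0 < p n := lt_of_lt_of_le (div_pos one_pos hnpos) (hp n)
    have hL0 : 0 ≤ L n := le_trans hK0 hKn
    have hcL : 12 * Real.log 4 + 6 ≤ c * L n := by
      rw [hKdef, div_le_iff₀ hc0] at hKn
      linarith [hKn]
    -- Step 1: union bound
    have step1 : 1 - dnpProb n (p n) (fun D : Finset (Eg n) =>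
        ∀ A B : Set (Fin n), Disjoint A B →
          Real.log (Real.log (Real.log (Real.log n))) / p n / 2 ≤ (A.ncard : ℝ) →
          (n : ℝ) / 3 ≤ (B.ncard : ℝ) →
          ((1 - ε) * p n * A.ncard * B.ncard ≤ (eOut D A B : ℝ) ∧
            (eOut D A B : ℝ) ≤ (1 + ε) * p n * A.ncard * B.ncard) ∧
          ((1 - ε) * p n * A.ncard * B.ncard ≤ (eOut D B A : ℝ) ∧
            (eOut D B A : ℝ) ≤ (1 + ε) * p n * A.ncard * B.ncard))
        ≤ (Fintype.card (Finset (Fin n) × Finset (Fin n) × Bool × Bool) : ℝ) *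
            Real.exp (-c * (L n / 2 * ((n : ℝ) / 3))) := by
      rw [dnpProb_eq_eProb, one_sub_eProb]
      refine le_trans (eProb_union_bound (hp0 n) (hp1 n)
          (univ : Finset (Finset (Fin n) × Finset (Fin n) × Bool × Bool)) _
          (badEv n (p n) ε (L n)) (fun D hD => badEv_extract (L n) D hD)) ?_
      calc ∑ i ∈ (univ : Finset (Finset (Fin n) × Finset (Fin n) × Bool × Bool)),
              eProb n (p n) (badEv n (p n) ε (L n) i)
          ≤ ∑ _i ∈ (univ : Finset (Finset (Fin n) × Finset (Fin n) × Bool × Bool)),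
              Real.exp (-(t * ε / 2) * (L n / 2 * ((n : ℝ) / 3))) :=
            Finset.sum_le_sum fun i _ =>
              eProb_badEv_le hppos (hp1 n) ht0 ht1 htε hL0 i
      _ = (Fintype.card (Finset (Fin n) × Finset (Fin n) × Bool × Bool) : ℝ) *
              Real.exp (-c * (L n / 2 * ((n : ℝ) / 3))) := by
            rw [Finset.sum_const, Finset.card_univ, nsmul_eq_mul, hcdef]
    -- Step 2: the numeric estimate
    have hcard : (Fintype.card (Finset (Fin n) × Finset (Fin n) × Bool × Bool) : ℝ)
        = (4:ℝ) ^ (n + 1) := by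
      have h1 : Fintype.card (Finset (Fin n) × Finset (Fin n) × Bool × Bool)
          = 2 ^ n * (2 ^ n * (2 * 2)) := by
        simp [Fintype.card_prod, Fintype.card_finset, Fintype.card_fin]
      rw [h1]
      push_cast
      rw [pow_succ, show ((4:ℝ)) = 2 * 2 by norm_num, mul_pow]
      ring
    have step2 : (Fintype.card (Finset (Fin n) × Finset (Fin n) × Bool × Bool) : ℝ) *
        Real.exp (-c * (L n / 2 * ((n : ℝ) / 3))) ≤ Real.exp (-(n : ℝ)) := by
      rw [hcard]
      have h5 : (4:ℝ) ^ (n + 1) = Real.exp (((n + 1 : ℕ) : ℝ) * Real.log 4) := by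
        rw [Real.exp_nat_mul, Real.exp_log (by norm_num : (0:ℝ) < 4)]
      rw [h5, ← Real.exp_add]
      apply Real.exp_le_exp.mpr
      push_cast
      have h6 : (12 * Real.log 4 + 6) * (n : ℝ) ≤ (c * L n) * (n : ℝ) :=
        mul_le_mul_of_nonneg_right hcL (by linarith)
      nlinarith [mul_nonneg hlog4 (sub_nonneg.mpr hn1'), h6]
    exact mul_le_mul_of_nonneg_left (step1.trans step2) (by positivity)
  · simpa [Function.comp_def] using
      ((Real.tendsto_pow_mul_exp_neg_atTop_nhds_zero 3).comp
        (tendsto_natCast_atTop_atTop (R := ℝ)))
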